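/- Continuity at 0 of the lifted map: suppose g : ℝ³ → ℝ³ satisfies: for every M ≥ 0 there exists N ≥ 0 such that (g(x))₃ ≤ -M whenever x₃ ≤ -N. Let T(x) = x - (1,1,0), and let F̃ : ℝ³ → ℝ³ be any function with F̃(0) = 0 and F̃(Z(T(x))) = Z(T(g(x))) for all x ∈ ℝ³. Then F̃ is continuous at 0. -/

import Mathlib

/-- Explicit vector in ℝ³ (with the Euclidean norm). -/
def vec3 (a b c : ℝ) : EuclideanSpace ℝ (Fin 3) := WithLp.toLp 2 ![a, b, c]

/-- The 4-periodic sawtooth: h(t) = t on [-1,1], h(t) = 2 - t on [1,3]. -/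
noncomputable def h (t : ℝ) : ℝ := 1 - |4 * Int.fract ((t + 1) / 4) - 2|

/-- The sign function ε(t) = (-1)^⌊(t+1)/2⌋. -/
noncomputable def eps (t : ℝ) : ℝ := (-1 : ℝ) ^ ⌊(t + 1) / 2⌋

/-- The Zorich-type map Z : ℝ³ → ℝ³. -/
noncomputable def Z (x : EuclideanSpace ℝ (Fin 3)) : EuclideanSpace ℝ (Fin 3) :=
  Real.exp (x 2) •
    vec3 (h (x 0)) (h (x 1)) (eps (x 0) * eps (x 1) * (1 - max |h (x 0)| |h (x 1)|))

section ZorichAux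

lemma h_abs_le (t : ℝ) : |h t| ≤ 1 := by
  have h1 := Int.fract_nonneg ((t + 1) / 4)
  have h2 := Int.fract_lt_one ((t + 1) / 4)
  have h3 : |4 * Int.fract ((t + 1) / 4) - 2| ≤ 2 := by
    rw [abs_le]; constructor <;> nlinarith
  have h4 := abs_nonneg (4 * Int.fract ((t + 1) / 4) - 2)
  rw [h, abs_le]; constructor <;> linarith

lemma h_eq (t : ℝ) (h1 : -1 ≤ t) (h2 : t ≤ 1) : h t = t := by
  have : Int.fract ((t + 1) / 4) = (t + 1) / 4 := by
    rw [Int.fract_eq_self]; constructor <;> nlinarith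
  rw [h, this, abs_of_nonpos (by linarith)]; ring

lemma eps_eq_one (t : ℝ) (h1 : -1 ≤ t) (h2 : t < 1) : eps t = 1 := by
  have h0 : ⌊(t + 1) / 2⌋ = 0 := by
    apply Int.floor_eq_iff.mpr <;> norm_num <;> constructor <;> linarith
  rw [eps, h0, zpow_zero]

lemma h_flip (t : ℝ) (h1 : -1 < t) (h2 : t < 1) : h (2 - t) = t := by
  have : Int.fract ((2 - t + 1) / 4) = (2 - t + 1) / 4 := by
    rw [Int.fract_eq_self]; constructor <;> nlinarith
  rw [h, this, abs_of_nonneg (by linarith)]; ring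

lemma eps_flip (t : ℝ) (h1 : -1 < t) (h2 : t < 1) : eps (2 - t) = -1 := by
  have h0 : ⌊(2 - t + 1) / 2⌋ = 1 := by
    apply Int.floor_eq_iff.mpr <;> norm_num <;> constructor <;> linarith
  rw [eps, h0, zpow_one]

lemma eps_abs (t : ℝ) : |eps t| = 1 := by
  rcases Int.even_or_odd ⌊(t + 1) / 2⌋ with he | ho
  · rw [eps, he.neg_one_zpow]; norm_num
  · rw [eps, ho.neg_one_zpow]; norm_num

lemma vec3_apply0 (a b c : ℝ) : (vec3 a b c) 0 = a := by simp [vec3]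
lemma vec3_apply1 (a b c : ℝ) : (vec3 a b c) 1 = b := by simp [vec3]
lemma vec3_apply2 (a b c : ℝ) : (vec3 a b c) 2 = c := by simp [vec3]

lemma norm_vec3 (a b c : ℝ) : ‖vec3 a b c‖ = Real.sqrt (a^2+b^2+c^2) := by
  rw [EuclideanSpace.norm_eq]
  simp [vec3, Fin.sum_univ_three, sq_abs]

lemma Z_norm_le (y : EuclideanSpace ℝ (Fin 3)) : ‖Z y‖ ≤ Real.sqrt 3 * Real.exp (y 2) := by
  rw [Z, norm_smul, norm_vec3, Real.norm_eq_abs, abs_of_pos (Real.exp_pos _), mul_comm]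
  gcongr
  set a := h (y 0); set b := h (y 1)
  have ha := h_abs_le (y 0); have hb := h_abs_le (y 1)
  have hmle : max |a| |b| ≤ 1 := max_le ha hb
  have hm0 : 0 ≤ max |a| |b| := le_trans (abs_nonneg a) (le_max_left _ _)
  have hc : |eps (y 0) * eps (y 1) * (1 - max |a| |b|)| ≤ 1 := by
    rw [abs_mul, abs_mul, eps_abs, eps_abs, one_mul, one_mul,
      abs_of_nonneg (by linarith)]
    linarith
  nlinarith [sq_abs a, sq_abs b, sq_abs (eps (y 0) * eps (y 1) * (1 - max |a| |b|)),
    abs_nonneg a, abs_nonneg b, abs_nonneg (eps (y 0) * eps (y 1) * (1 - max |a| |b|))]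

lemma Z_norm_ge (y : EuclideanSpace ℝ (Fin 3)) : Real.exp (y 2) ≤ 2 * ‖Z y‖ := by
  rw [Z, norm_smul, norm_vec3, Real.norm_eq_abs, abs_of_pos (Real.exp_pos _)]
  set a := h (y 0); set b := h (y 1)
  set c := eps (y 0) * eps (y 1) * (1 - max |a| |b|) with hc
  have key : 1 ≤ 2 * Real.sqrt (a^2 + b^2 + c^2) := by
    set m := max |a| |b| with hm
    have hm0 : 0 ≤ m := le_trans (abs_nonneg a) (le_max_left _ _)
    have hcabs : |c| = |1 - m| := by
      rw [hc, abs_mul, abs_mul, eps_abs, eps_abs, one_mul, one_mul]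
    have h1 : m ≤ Real.sqrt (a^2+b^2+c^2) := by
      rcases max_cases |a| |b| with ⟨he, _⟩ | ⟨he, _⟩
      · rw [hm, he, ← Real.sqrt_sq (abs_nonneg a), sq_abs]
        apply Real.sqrt_le_sqrt; nlinarith [sq_nonneg b, sq_nonneg c]
      · rw [hm, he, ← Real.sqrt_sq (abs_nonneg b), sq_abs]
        apply Real.sqrt_le_sqrt; nlinarith [sq_nonneg a, sq_nonneg c]
    have h2 : |1 - m| ≤ Real.sqrt (a^2+b^2+c^2) := by
      rw [← hcabs, ← Real.sqrt_sq (abs_nonneg c), sq_abs]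
      apply Real.sqrt_le_sqrt; nlinarith [sq_nonneg a, sq_nonneg b]
    have : 1 - m ≤ |1 - m| := le_abs_self _
    linarith
  nlinarith [Real.exp_pos (y 2), Real.sqrt_nonneg (a^2+b^2+c^2)]

lemma Z_vec3 (p q r : ℝ) : Z (vec3 p q r) =
    Real.exp r • vec3 (h p) (h q) (eps p * eps q * (1 - max |h p| |h q|)) := by
  rw [Z, vec3_apply0, vec3_apply1, vec3_apply2]

lemma smul_vec3_eq (r a b c : ℝ) (w : EuclideanSpace ℝ (Fin 3))
    (h0 : r * a = w 0) (h1 : r * b = w 1) (h2 : r * c = w 2) :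
    r • vec3 a b c = w := by
  ext i; fin_cases i <;> simp [vec3] <;> assumption

lemma Z_surj (w : EuclideanSpace ℝ (Fin 3)) (hw : w ≠ 0) : ∃ y, Z y = w := by
  set s := max |w 0| |w 1| + |w 2| with hsdef
  have h2nn := abs_nonneg (w 2)
  have hmax0 : (0:ℝ) ≤ max |w 0| |w 1| := le_trans (abs_nonneg _) (le_max_left _ _)
  have hs0 : 0 < s := by
    rcases lt_or_eq_of_le (by linarith : (0:ℝ) ≤ s) with hlt | heq
    · exact hlt
    · exfalso; apply hw
      have e0 : w 0 = 0 := abs_eq_zero.mp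
        (le_antisymm (by linarith [le_max_left |w 0| |w 1|]) (abs_nonneg _))
      have e1 : w 1 = 0 := abs_eq_zero.mp
        (le_antisymm (by linarith [le_max_right |w 0| |w 1|]) (abs_nonneg _))
      have e2 : w 2 = 0 := abs_eq_zero.mp (le_antisymm (by linarith) (abs_nonneg _))
      ext i; fin_cases i <;> simpa using by assumption
  set u0 := w 0 / s with hu0def
  set u1 := w 1 / s with hu1def
  set u2 := w 2 / s with hu2def
  have hau0 : |u0| = |w 0| / s := by rw [hu0def, abs_div, abs_of_pos hs0]
  have hau1 : |u1| = |w 1| / s := by rw [hu1def, abs_div, abs_of_pos hs0]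
  have hau2 : |u2| = |w 2| / s := by rw [hu2def, abs_div, abs_of_pos hs0]
  have hmaxu : max |u0| |u1| = max |w 0| |w 1| / s := by
    rw [hau0, hau1, max_div_div_right hs0.le]
  have hsum : max |u0| |u1| + |u2| = 1 := by
    rw [hmaxu, hau2, ← add_div, ← hsdef, div_self hs0.ne']
  have hu0le : |u0| ≤ max |u0| |u1| := le_max_left _ _
  have hu1le : |u1| ≤ max |u0| |u1| := le_max_right _ _
  have hu2nn : 0 ≤ |u2| := abs_nonneg _
  have hback : ∀ i : Fin 3, s * (w i / s) = w i := fun i => mul_div_cancel₀ _ hs0.ne'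
  rcases lt_trichotomy (w 2) 0 with hc | hc | hc
  · have hu2neg : u2 < 0 := div_neg_of_neg_of_pos hc hs0
    have habs2 : |u2| = -u2 := abs_of_neg hu2neg
    have hmlt : max |u0| |u1| < 1 := by linarith [abs_pos.mpr hu2neg.ne]
    have h0lt := lt_of_le_of_lt hu0le hmlt
    have h1lt := lt_of_le_of_lt hu1le hmlt
    rw [abs_lt] at h0lt h1lt
    refine ⟨vec3 u0 (2 - u1) (Real.log s), ?_⟩
    rw [Z_vec3, h_eq u0 h0lt.1.le h0lt.2.le, h_flip u1 h1lt.1 h1lt.2,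
      eps_eq_one u0 h0lt.1.le h0lt.2, eps_flip u1 h1lt.1 h1lt.2, Real.exp_log hs0]
    refine smul_vec3_eq _ _ _ _ _ (hback 0) (hback 1) ?_
    have : 1 * -1 * (1 - max |u0| |u1|) = u2 := by linarith
    rw [this]; exact hback 2
  · have hu2z : u2 = 0 := by rw [hu2def, hc, zero_div]
    have hmeq : max |u0| |u1| = 1 := by rw [← hsum, hu2z, abs_zero, add_zero]
    have h0le : |u0| ≤ 1 := hmeq ▸ hu0le
    have h1le : |u1| ≤ 1 := hmeq ▸ hu1le
    rw [abs_le] at h0le h1le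
    refine ⟨vec3 u0 u1 (Real.log s), ?_⟩
    rw [Z_vec3, h_eq u0 h0le.1 h0le.2, h_eq u1 h1le.1 h1le.2, Real.exp_log hs0]
    refine smul_vec3_eq _ _ _ _ _ (hback 0) (hback 1) ?_
    rw [hmeq, sub_self, mul_zero, mul_zero]; exact hc.symm
  · have hu2pos : 0 < u2 := div_pos hc hs0
    have habs2 : |u2| = u2 := abs_of_pos hu2pos
    have hmlt : max |u0| |u1| < 1 := by linarith
    have h0lt := lt_of_le_of_lt hu0le hmlt
    have h1lt := lt_of_le_of_lt hu1le hmlt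
    rw [abs_lt] at h0lt h1lt
    refine ⟨vec3 u0 u1 (Real.log s), ?_⟩
    rw [Z_vec3, h_eq u0 h0lt.1.le h0lt.2.le, h_eq u1 h1lt.1.le h1lt.2.le,
      eps_eq_one u0 h0lt.1.le h0lt.2, eps_eq_one u1 h1lt.1.le h1lt.2, Real.exp_log hs0]
    refine smul_vec3_eq _ _ _ _ _ (hback 0) (hback 1) ?_
    have : 1 * 1 * (1 - max |u0| |u1|) = u2 := by linarith
    rw [this]; exact hback 2

end ZorichAux

/-- Rotation by π about the vertical line {(u,v,t) : t ∈ ℝ}. -/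
noncomputable def Rot (u v : ℝ) (x : EuclideanSpace ℝ (Fin 3)) : EuclideanSpace ℝ (Fin 3) :=
  vec3 (2 * u - x 0) (2 * v - x 1) (x 2)

/-- Continuity at 0 of the lifted map: if g pushes far-down points arbitrarily
    far down (property (III)) and F̃ satisfies F̃(0) = 0 and
    F̃(Z(T(x))) = Z(T(g(x))) where T(x) = x - (1,1,0), then F̃ is continuous at 0. -/
theorem lifted_map_continuous_at_zero
    (g : EuclideanSpace ℝ (Fin 3) → EuclideanSpace ℝ (Fin 3))
    (hIII : ∀ M : ℝ, 0 ≤ M → ∃ N : ℝ, 0 ≤ N ∧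
      ∀ x : EuclideanSpace ℝ (Fin 3), x 2 ≤ -N → g x 2 ≤ -M)
    (F : EuclideanSpace ℝ (Fin 3) → EuclideanSpace ℝ (Fin 3))
    (hF0 : F 0 = 0)
    (hF : ∀ x : EuclideanSpace ℝ (Fin 3),
      F (Z (x - vec3 1 1 0)) = Z (g x - vec3 1 1 0)) :
    ContinuousAt F 0 := by
  rw [Metric.continuousAt_iff]
  intro ε hε
  set M := max 0 (Real.log (2 * Real.sqrt 3 / ε)) with hMdef
  have hM0 : (0:ℝ) ≤ M := le_max_left _ _
  have hs3 : (0:ℝ) < Real.sqrt 3 := by positivity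
  have hMε : Real.sqrt 3 * Real.exp (-M) < ε := by
    have hq : 0 < 2 * Real.sqrt 3 / ε := by positivity
    have hE := Real.exp_pos M
    have hle : 2 * Real.sqrt 3 / ε ≤ Real.exp M := by
      calc 2 * Real.sqrt 3 / ε = Real.exp (Real.log (2 * Real.sqrt 3 / ε)) :=
            (Real.exp_log hq).symm
        _ ≤ Real.exp M := Real.exp_le_exp.mpr (le_max_right _ _)
    have h1 : 2 * Real.sqrt 3 ≤ ε * Real.exp M := by
      rw [div_le_iff₀ hε] at hle; linarith
    rw [Real.exp_neg]
    have h2 : Real.sqrt 3 * (Real.exp M)⁻¹ ≤ ε / 2 := by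
      rw [mul_inv_le_iff₀ hE] at *
      nlinarith
    linarith
  obtain ⟨N, hN0, hN⟩ := hIII M hM0
  refine ⟨Real.exp (-N) / 2, by positivity, ?_⟩
  intro w hw
  rw [dist_zero_right] at hw
  rw [hF0, dist_zero_right]
  by_cases hw0 : w = 0
  · rw [hw0, hF0, norm_zero]; exact hε
  · obtain ⟨y, hy⟩ := Z_surj w hw0
    set x := y + vec3 1 1 0 with hxdef
    have hxy : x - vec3 1 1 0 = y := by rw [hxdef]; abel
    have hFw : F w = Z (g x - vec3 1 1 0) := by
      rw [← hy, ← hxy]; exact hF x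
    have hx2 : x 2 = y 2 := by
      rw [hxdef]
      have : (y + vec3 1 1 0) 2 = y 2 + (vec3 1 1 0) 2 := rfl
      rw [this, vec3_apply2, add_zero]
    have h1 : Real.exp (y 2) ≤ 2 * ‖w‖ := hy ▸ Z_norm_ge y
    have h2 : y 2 < -N := by
      have : Real.exp (y 2) < Real.exp (-N) := lt_of_le_of_lt h1 (by linarith)
      exact Real.exp_lt_exp.mp this
    have h3 : g x 2 ≤ -M := hN x (by rw [hx2]; exact h2.le)
    have hgx2 : (g x - vec3 1 1 0) 2 = g x 2 := by
      have : (g x - vec3 1 1 0) 2 = g x 2 - (vec3 1 1 0) 2 := rfl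
      rw [this, vec3_apply2, sub_zero]
    calc ‖F w‖ = ‖Z (g x - vec3 1 1 0)‖ := by rw [hFw]
      _ ≤ Real.sqrt 3 * Real.exp ((g x - vec3 1 1 0) 2) := Z_norm_le _
      _ ≤ Real.sqrt 3 * Real.exp (-M) := by
          gcongr
          · exact hgx2 ▸ h3
      _ < ε := hMε
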